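/- arXiv:2503.18205 — 5 statements merged into one kernel-verified Lean document; each statement's English description precedes it below -/
import Mathlib

section
/- Let A be a commutative ring of characteristic zero, t ∈ A an element such that A is t-adically complete, and ∂ : A → A a derivation with ∂(t) a unit. Then the composition Ker(∂) → A → A/tA is an isomorphism of rings. -/
open Finset

section Aux

variable {A : Type*} [CommRing A] [Algebra ℚ A]

private lemma aux_one (D : A →+ A)
    (hmul : ∀ a b : A, D (a * b) = a * D b + b * D a) : D 1 = 0 := by
  have h := hmul 1 1
  simp only [one_mul] at h
  exact (right_eq_add.mp h)

private lemma aux_natCast (D : A →+ A)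
    (hmul : ∀ a b : A, D (a * b) = a * D b + b * D a) (n : ℕ) : D (n : A) = 0 := by
  have : ((n : A)) = n • (1 : A) := by simp
  rw [this, map_nsmul, aux_one D hmul, smul_zero]

private lemma aux_const (D : A →+ A)
    (hmul : ∀ a b : A, D (a * b) = a * D b + b * D a) {c : A} (hc : D c = 0) (x : A) :
    D (c * x) = c * D x := by
  rw [hmul, hc]; ring

private lemma aux_torsionfree {n : ℕ} (hn : n ≠ 0) {x : A} (h : (n : A) * x = 0) : x = 0 := by
  have h1 : (algebraMap ℚ A (n : ℚ)⁻¹) * ((n : A) * x) = x := by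
    rw [← map_natCast (algebraMap ℚ A) n, ← mul_assoc, ← map_mul,
      inv_mul_cancel₀ (by exact_mod_cast hn)]
    simp
  rw [h, mul_zero] at h1
  exact h1.symm

private lemma aux_pow (t : A) (D : A →+ A)
    (hmul : ∀ a b : A, D (a * b) = a * D b + b * D a) (ht : D t = 1) (n : ℕ) (x : A) :
    D (t ^ (n + 1) * x) = ((n : A) + 1) * (t ^ n * x) + t ^ (n + 1) * D x := by
  induction n with
  | zero => simp only [pow_one, pow_zero, Nat.cast_zero, zero_add, one_mul, hmul, ht]; ring
  | succ n ih =>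
    have h : t ^ (n + 2) * x = t * (t ^ (n + 1) * x) := by ring
    rw [h, hmul, ih, ht]
    push_cast; ring

end Aux

/-- Splitting lemma: for a `t`-adically complete ring `A` of characteristic zero and a
derivation `D` with `D t` a unit, the composition `Ker D → A → A/tA` is a ring isomorphism
(formalized as bijectivity of the induced map, which is a restriction of a ring homomorphism). -/
theorem statement0 {A : Type*} [CommRing A] [Algebra ℚ A] (t : A)
    (hcomplete : IsAdicComplete (Ideal.span {t}) A)
    (D : A → A)
    (hadd : ∀ a b : A, D (a + b) = D a + D b)
    (hleibniz : ∀ a b : A, D (a * b) = a * D b + b * D a)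
    (hunit : IsUnit (D t)) :
    Function.Bijective
      (fun x : {a : A // D a = 0} => Ideal.Quotient.mk (Ideal.span {t}) x.1) := by
  obtain ⟨u, hu⟩ := hunit
  set I : Ideal A := Ideal.span {t} with hI
  -- normalized derivation
  set Dh : A →+ A := AddMonoidHom.mk' (fun a => ↑u⁻¹ * D a) (by
    intro a b; simp only [hadd]; ring) with hDh
  have hDhapp : ∀ a : A, Dh a = ↑u⁻¹ * D a := fun a => rfl
  have hmul : ∀ a b : A, Dh (a * b) = a * Dh b + b * Dh a := by
    intro a b; simp only [hDhapp, hleibniz]; ring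
  have ht : Dh t = 1 := by
    rw [hDhapp, ← hu, Units.inv_mul]
  have hker : ∀ a : A, D a = 0 ↔ Dh a = 0 := by
    intro a
    constructor
    · intro h; rw [hDhapp, h, mul_zero]
    · intro h
      have : (↑u : A) * Dh a = 0 := by rw [h, mul_zero]
      rwa [hDhapp, ← mul_assoc, Units.mul_inv, one_mul] at this
  -- the coefficients
  set e : ℕ → A := fun n => algebraMap ℚ A ((-1) ^ n / n.factorial) with he
  have he0 : e 0 = 1 := by simp [he]
  have heD : ∀ n, Dh (e n) = 0 := by
    intro n
    have hfact : ((n.factorial : A)) * e n = ((-1 : A)) ^ n := by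
      rw [he, ← map_natCast (algebraMap ℚ A), ← map_mul]
      rw [show ((n.factorial : ℚ)) * ((-1) ^ n / n.factorial) = (-1) ^ n by
        field_simp]
      simp
    have hneg : Dh ((-1 : A) ^ n) = 0 := by
      rcases Nat.even_or_odd n with h | h
      · rw [h.neg_one_pow]; exact aux_one Dh hmul
      · rw [h.neg_one_pow, map_neg, aux_one Dh hmul, neg_zero]
    have := congrArg Dh hfact
    rw [hmul, aux_natCast Dh hmul n.factorial, mul_zero, add_zero, hneg] at this
    exact aux_torsionfree n.factorial_ne_zero this
  have herec : ∀ n : ℕ, ((n : A) + 1) * e (n + 1) = - e n := by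
    intro n
    have : ((n : A) + 1) = algebraMap ℚ A ((n : ℚ) + 1) := by push_cast; simp
    rw [he, this, ← map_mul, ← map_neg]
    congr 1
    have h1 : ((n.factorial : ℚ)) ≠ 0 := by exact_mod_cast n.factorial_ne_zero
    push_cast [Nat.factorial_succ, pow_succ]
    field_simp
  have hIn : ∀ n : ℕ, (I ^ n • ⊤ : Submodule A A) = Ideal.span {t ^ n} := by
    intro n
    rw [smul_eq_mul, Ideal.mul_top, hI, Ideal.span_singleton_pow]
  -- Injectivity
  have hinj : ∀ a : A, Dh a = 0 → a ∈ I → a = 0 := by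
    intro a ha haI
    rw [hI, Ideal.mem_span_singleton] at haI
    obtain ⟨c, rfl⟩ := haI
    have hc0 : c + t * Dh c = 0 := by
      have := hmul t c
      rw [ha, ht] at this
      linear_combination -this
    have key : ∀ k : ℕ, ((k : A) + 1) * Dh^[k] c = -(t * Dh^[k + 1] c) := by
      intro k
      induction k with
      | zero => simpa using by linear_combination hc0
      | succ k ih =>
        have h2 := congrArg Dh ih
        have hcast : Dh ((k : A) + 1) = 0 := by
          rw [show ((k : A) + 1) = ((k + 1 : ℕ) : A) by push_cast; ring]
          exact aux_natCast Dh hmul _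
        rw [show ((k : A) + 1) * Dh^[k] c = (((k : A) + 1) * Dh^[k] c) from rfl] at h2
        rw [aux_const Dh hmul hcast, map_neg, hmul, ht] at h2
        simp only [Function.iterate_succ_apply'] at h2 ⊢
        push_cast
        linear_combination h2
    have hfc : ∀ n : ℕ, ((n.factorial : A)) * c = (-1 : A) ^ n * (t ^ n * Dh^[n] c) := by
      intro n
      induction n with
      | zero => simp
      | succ n ih =>
        have hk := key n
        rw [Nat.factorial_succ, Function.iterate_succ_apply'] at *
        push_cast
        push_cast at ih
        linear_combination ((n : A) + 1) * ih + ((-1 : A) ^ n * t ^ n) * hk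
    have hczero : c = 0 := by
      apply hcomplete.toIsHausdorff.haus c
      intro n
      rw [SModEq.zero, hIn n, Ideal.mem_span_singleton]
      have hinv : algebraMap ℚ A (1 / (n.factorial : ℚ)) * ((n.factorial : ℕ) : A) = 1 := by
        rw [← map_natCast (algebraMap ℚ A), ← map_mul, one_div,
          inv_mul_cancel₀ (by exact_mod_cast n.factorial_ne_zero)]
        simp
      refine ⟨algebraMap ℚ A (1 / (n.factorial : ℚ)) * ((-1 : A) ^ n * Dh^[n] c), ?_⟩
      linear_combination (algebraMap ℚ A (1 / (n.factorial : ℚ))) * hfc n - c * hinv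
    rw [hczero, mul_zero]
  -- Surjectivity via the exponential series
  constructor
  · rintro ⟨x, hx⟩ ⟨y, hy⟩ hxy
    simp only [Subtype.mk.injEq]
    have hmem : x - y ∈ I := by
      rw [hI, ← Ideal.Quotient.mk_eq_mk_iff_sub_mem]
      exact hxy
    have hD : Dh (x - y) = 0 := by
      rw [map_sub, (hker x).mp hx, (hker y).mp hy, sub_zero]
    have := hinj (x - y) hD hmem
    exact sub_eq_zero.mp this
  · intro q
    obtain ⟨a, rfl⟩ := Ideal.Quotient.mk_surjective q
    set S : ℕ → A := fun N => ∑ n ∈ Finset.range N, e n * (t ^ n * Dh^[n] a) with hS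
    have hcauchy : ∀ {m n : ℕ}, m ≤ n → S m ≡ S n [SMOD (I ^ m • ⊤ : Submodule A A)] := by
      intro m n hmn
      rw [SModEq.sub_mem, hIn m, Ideal.mem_span_singleton]
      induction n, hmn using Nat.le_induction with
      | base => simp
      | succ n hmn ih =>
        have : S m - S (n + 1) = (S m - S n) - e n * (t ^ n * Dh^[n] a) := by
          rw [hS]; simp [Finset.sum_range_succ]; ring
        rw [this]
        apply dvd_sub ih
        exact (((pow_dvd_pow t hmn).mul_right _).mul_left _)
    obtain ⟨L, hL⟩ := hcomplete.toIsPrecomplete.prec hcauchy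
    have hLS : ∀ n, t ^ n ∣ L - S n := by
      intro n
      have h := (hL n).symm
      rw [SModEq.sub_mem, hIn n, Ideal.mem_span_singleton] at h
      exact h
    have hDS : ∀ N : ℕ, Dh (S (N + 1)) = e N * (t ^ N * Dh^[N + 1] a) := by
      intro N
      induction N with
      | zero => simp [hS, he0]
      | succ N ih =>
        have hsplit : S (N + 2) = S (N + 1) + e (N + 1) * (t ^ (N + 1) * Dh^[N + 1] a) := by
          rw [hS]; simp [Finset.sum_range_succ]
        rw [hsplit, map_add, ih, aux_const Dh hmul (heD (N + 1)),
          aux_pow t Dh hmul ht N (Dh^[N + 1] a)]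
        rw [show Dh^[N + 2] a = Dh (Dh^[N + 1] a) from Function.iterate_succ_apply' Dh (N + 1) a]
        linear_combination (t ^ N * Dh^[N + 1] a) * herec N
    have hDL : Dh L = 0 := by
      apply hcomplete.toIsHausdorff.haus (Dh L)
      intro n
      rw [SModEq.zero, hIn n, Ideal.mem_span_singleton]
      obtain ⟨c, hc⟩ := hLS (n + 1)
      have : L = S (n + 1) + t ^ (n + 1) * c := by rw [← hc]; ring
      rw [this, map_add, hDS n, aux_pow t Dh hmul ht n c]
      apply dvd_add
      · exact ((dvd_rfl.mul_right _).mul_left _)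
      apply dvd_add
      · exact ((dvd_rfl.mul_right _).mul_left _)
      · exact ((pow_dvd_pow t (Nat.le_succ n)).mul_right _)
    refine ⟨⟨L, (hker L).mpr hDL⟩, ?_⟩
    have : L - a ∈ I := by
      have h1 := hLS 1
      rw [pow_one] at h1
      have : S 1 = a := by simp [hS, he0]
      rw [hI, Ideal.mem_span_singleton]
      rwa [this] at h1
    simp only [Ideal.Quotient.mk_eq_mk_iff_sub_mem]
    exact this
end

section
/- Let A be a commutative ring of characteristic zero, t ∈ A such that A is t-adically complete, and ∂ : A → A a derivation with ∂(t) = 1. If b = Σ_{i≥0} b_i t^i with all b_i ∈ Ker(∂) and ∂(b) = 0, then b = b_0, i.e. the natural map from the power series construction Ker(∂)⟦t⟧ → A is injective on elements mapping into Ker(∂). -/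
/-- If `A` is `t`-adically complete of characteristic zero, `D` is a derivation with
`D t = 1`, and `b = Σ_{i≥0} b_i t^i` with all `b_i ∈ Ker D` (convergence expressed via
partial sums) satisfies `D b = 0`, then `b = b_0`. -/
theorem statement1 {A : Type*} [CommRing A] [Algebra ℚ A] (t : A)
    (hcomplete : IsAdicComplete (Ideal.span {t}) A)
    (D : A → A)
    (hadd : ∀ a b : A, D (a + b) = D a + D b)
    (hleibniz : ∀ a b : A, D (a * b) = a * D b + b * D a)
    (hDt : D t = 1)
    (b : A) (bs : ℕ → A)
    (hker : ∀ i, D (bs i) = 0)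
    (hconv : ∀ N : ℕ, b - ∑ i ∈ Finset.range N, bs i * t ^ i ∈ (Ideal.span {t}) ^ N)
    (hDb : D b = 0) :
    b = bs 0 := by
  -- D of a power of t
  have hDpow : ∀ n : ℕ, D (t ^ (n + 1)) = (n + 1 : ℕ) * t ^ n := by
    intro n
    induction n with
    | zero => simpa using hDt
    | succ n ih =>
      have : t ^ (n + 2) = t * t ^ (n + 1) := by ring
      rw [this, hleibniz, ih, hDt]
      push_cast
      ring
  set x := b - bs 0 with hx
  have hDx : D x = 0 := by
    have h := hadd x (bs 0)
    have hxb : x + bs 0 = b := by ring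
    rw [hxb, hDb, hker 0, add_zero] at h
    exact h.symm
  -- base case: x ∈ (t)^1
  have hbase : x ∈ Ideal.span {t} ^ 1 := by
    have h := hconv 1
    simpa [hx] using h
  -- inductive step
  have hstep : ∀ n : ℕ, x ∈ Ideal.span {t} ^ (n + 1) → x ∈ Ideal.span {t} ^ (n + 2) := by
    intro n hn
    rw [Ideal.span_singleton_pow, Ideal.mem_span_singleton'] at hn ⊢
    obtain ⟨c, hc⟩ := hn
    have h0 : D (c * t ^ (n + 1)) = 0 := by rw [hc, hDx]
    rw [hleibniz, hDpow] at h0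
    -- c * ((n+1) * t^n) + t^(n+1) * D c = 0
    have key : ((n + 1 : ℕ) : A) * (c * t ^ n) = -(t ^ (n + 1) * D c) := by
      linear_combination h0
    -- divide by n+1 using the ℚ-algebra structure
    have hinv : c * t ^ n = algebraMap ℚ A (((n : ℚ) + 1)⁻¹) * -(t ^ (n + 1) * D c) := by
      rw [← key]
      have : ((n + 1 : ℕ) : A) = algebraMap ℚ A ((n : ℚ) + 1) := by push_cast; simp
      rw [this, ← mul_assoc, ← map_mul, inv_mul_cancel₀ (by positivity : (n : ℚ) + 1 ≠ 0)]
      simp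
    refine ⟨algebraMap ℚ A (((n : ℚ) + 1)⁻¹) * -(D c), ?_⟩
    rw [← hc]
    have : c * t ^ (n + 1) = (c * t ^ n) * t := by ring
    rw [this, hinv]
    ring
  have hall : ∀ n : ℕ, x ∈ Ideal.span {t} ^ n := by
    intro n
    induction n with
    | zero => simp
    | succ n ih =>
      cases n with
      | zero => exact hbase
      | succ m => exact hstep m ih
  -- Hausdorff-ness
  have hx0 : x = 0 := by
    haveI := hcomplete.toIsHausdorff
    refine IsHausdorff.haus ‹IsHausdorff (Ideal.span {t}) A› x fun n => ?_
    rw [SModEq.zero]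
    simpa using hall n
  exact sub_eq_zero.mp hx0
end

section
/- Let A be a commutative ring of characteristic zero, t ∈ A such that A is t-adically complete, and ∂ : A → A a derivation with ∂(t) = 1. Then for any a ∈ A, the element Σ_{i=0}^∞ ((-1)^i / i!) t^i ∂^i(a) lies in Ker(∂) and is congruent to a modulo tA. -/
/-- If `A` is `t`-adically complete of characteristic zero and `D` is a derivation with
`D t = 1`, then any element `s = Σ_{i≥0} ((-1)^i/i!) t^i D^i(a)` (convergence of the sum
expressed via partial sums) lies in `Ker D` and is congruent to `a` modulo `tA`. -/
theorem statement2 {A : Type*} [CommRing A] [Algebra ℚ A] (t : A)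
    (hcomplete : IsAdicComplete (Ideal.span {t}) A)
    (D : A → A)
    (hadd : ∀ a b : A, D (a + b) = D a + D b)
    (hleibniz : ∀ a b : A, D (a * b) = a * D b + b * D a)
    (hDt : D t = 1)
    (a : A) (s : A)
    (hs : ∀ N : ℕ,
      s - ∑ i ∈ Finset.range N, ((-1 : ℚ) ^ i / (Nat.factorial i : ℚ)) • (t ^ i * D^[i] a)
        ∈ (Ideal.span {t}) ^ N) :
    D s = 0 ∧ s - a ∈ Ideal.span {t} := by
  classical
  let F : A →+ A := AddMonoidHom.mk' D hadd
  have hF : ∀ x, F x = D x := fun x => rfl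
  have hD1 : D (1 : A) = 0 := by
    have h := hleibniz 1 1
    simp only [one_mul] at h
    exact right_eq_add.mp h
  have hsmul : ∀ (q : ℚ) (x : A), D (q • x) = q • D x := by
    have hnat : ∀ (n : ℕ) (x : A), D ((n : ℚ) • x) = (n : ℚ) • D x := by
      intro n x
      rw [Nat.cast_smul_eq_nsmul, Nat.cast_smul_eq_nsmul, ← hF, ← hF, map_nsmul, hF]
    have hint : ∀ (n : ℤ) (x : A), D ((n : ℚ) • x) = (n : ℚ) • D x := by
      intro n x
      rw [Int.cast_smul_eq_zsmul, Int.cast_smul_eq_zsmul, ← hF, ← hF, map_zsmul, hF]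
    intro q x
    have hd : ((q.den : ℚ)) ≠ 0 := by
      exact_mod_cast q.den_ne_zero
    have hqd : (q.den : ℚ) * q = (q.num : ℚ) := by
      have h := Rat.num_div_den q
      rw [div_eq_iff hd] at h
      rw [mul_comm, h]
    have h1 : (q.den : ℚ) • D (q • x) = (q.num : ℚ) • D x := by
      rw [← hnat q.den (q • x), smul_smul, hqd, hint]
    have h2 : D (q • x) = ((q.den : ℚ)⁻¹ * (q.num : ℚ)) • D x := by
      rw [← smul_smul, ← h1, smul_smul, inv_mul_cancel₀ hd, one_smul]
    rw [h2, inv_mul_eq_div, Rat.num_div_den]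
  -- derivative of powers of t
  have hDpow : ∀ n : ℕ, D (t ^ (n + 1)) = ((n : ℚ) + 1) • t ^ n := by
    intro n
    induction n with
    | zero => simp [hDt]
    | succ n ih =>
      have : t ^ (n + 2) = t * t ^ (n + 1) := by ring
      rw [this, hleibniz, ih, hDt, mul_smul_comm, mul_one]
      have : t * t ^ n = t ^ (n + 1) := by ring
      rw [this]
      push_cast
      module
  -- the partial sums
  set c : ℕ → ℚ := fun i => (-1 : ℚ) ^ i / (Nat.factorial i : ℚ) with hc
  set S : ℕ → A := fun N => ∑ i ∈ Finset.range N, c i • (t ^ i * D^[i] a) with hSdef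
  have hcoef : ∀ N : ℕ, c N + ((N : ℚ) + 1) * c (N + 1) = 0 := by
    intro N
    have h1 : ((Nat.factorial N : ℚ)) ≠ 0 := by
      exact_mod_cast (Nat.factorial_pos N).ne'
    have h2 : ((Nat.factorial (N + 1) : ℚ)) ≠ 0 := by
      exact_mod_cast (Nat.factorial_pos (N + 1)).ne'
    have h3 : (Nat.factorial (N + 1) : ℚ) = ((N : ℚ) + 1) * (Nat.factorial N : ℚ) := by
      rw [Nat.factorial_succ]; push_cast; ring
    simp only [hc]
    rw [h3]
    field_simp
    ring
  have hDS : ∀ N : ℕ, D (S (N + 1)) = c N • (t ^ N * D^[N + 1] a) := by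
    intro N
    induction N with
    | zero =>
      simp only [hSdef, Finset.sum_range_one]
      simp [hc, hsmul, Function.iterate_succ_apply']
    | succ N ih =>
      have hstep : S (N + 2) = S (N + 1) + c (N + 1) • (t ^ (N + 1) * D^[N + 1] a) := by
        simp [hSdef, Finset.sum_range_succ]
      rw [hstep, hadd, ih, hsmul, hleibniz, hDpow,
        Function.iterate_succ_apply' D (N + 1) a, Function.iterate_succ_apply' D N a]
      have hcN : c N = -(((N : ℚ) + 1) * c (N + 1)) := by linarith [hcoef N]
      rw [hcN, mul_smul_comm, mul_comm (D (D^[N] a)) (t ^ N)]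
      module
  -- membership of D s in powers of the ideal
  have hIpow : ∀ N : ℕ, (Ideal.span {t}) ^ N = Ideal.span {t ^ N} := fun N =>
    Ideal.span_singleton_pow t N
  have hmemDS : ∀ N : ℕ, D (S (N + 1)) ∈ Ideal.span {t ^ N} := by
    intro N
    rw [hDS N, Algebra.smul_def]
    exact Ideal.mem_span_singleton.2 ⟨algebraMap ℚ A (c N) * D^[N + 1] a, by ring⟩
  have hmemDrest : ∀ N : ℕ, D (s - S (N + 1)) ∈ Ideal.span {t ^ N} := by
    intro N
    have h := hs (N + 1)
    rw [hIpow] at h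
    obtain ⟨x, hx⟩ := Ideal.mem_span_singleton.1 h
    have heq : s - S (N + 1) = t ^ (N + 1) * x := hx
    rw [heq, hleibniz, hDpow, Algebra.smul_def]
    refine Ideal.add_mem _ ?_ ?_
    · exact Ideal.mem_span_singleton.2 ⟨t * D x, by ring⟩
    · exact Ideal.mem_span_singleton.2 ⟨x * algebraMap ℚ A ((N : ℚ) + 1), by ring⟩
  have hmem : ∀ N : ℕ, D s ∈ (Ideal.span {t}) ^ N := by
    intro N
    rw [hIpow]
    have h1 : s = S (N + 1) + (s - S (N + 1)) := by ring
    have h2 : D s = D (S (N + 1)) + D (s - S (N + 1)) := by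
      conv_lhs => rw [h1]
      exact hadd _ _
    rw [h2]
    exact Ideal.add_mem _ (hmemDS N) (hmemDrest N)
  constructor
  · refine hcomplete.toIsHausdorff.haus (D s) ?_
    intro n
    rw [SModEq.zero, Ideal.smul_eq_mul, Ideal.mul_top]
    exact hmem n
  · have h := hs 1
    simp only [Finset.sum_range_one, pow_zero, Nat.factorial_zero, Nat.cast_one, div_one,
      Function.iterate_zero, id_eq, one_mul, one_smul, pow_one] at h
    exact h
end

section
/- Let R be a Noetherian commutative ring and I, J ideals with the same integral closure, i.e. Ī = J̄. Then for every n ≥ 1, Iⁿ and Jⁿ have the same integral closure. -/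
/-- The integral closure of an ideal `I` of `R`: the set of `x ∈ R` satisfying an equation
`xⁿ + a₁x^{n−1} + ⋯ + aₙ = 0` with `aᵢ ∈ Iⁱ`. -/
def idealIntegralClosure {R : Type*} [CommRing R] (I : Ideal R) : Set R :=
  {x : R | ∃ m : ℕ, 0 < m ∧ ∃ a : ℕ → R,
    (∀ i, 1 ≤ i → i ≤ m → a i ∈ I ^ i) ∧
    x ^ m + ∑ i ∈ Finset.Icc 1 m, a i * x ^ (m - i) = 0}

open Polynomial


-- monotonicity of IsIntegral in subalgebras
lemma aux_mono {R A : Type*} [CommRing R] [CommRing A] [Algebra R A] {S T : Subalgebra R A}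
    (hle : ∀ w ∈ S, w ∈ T) {z : A} (hz : IsIntegral S z) : IsIntegral T z := by
  obtain ⟨p, hp, he⟩ := hz
  refine ⟨p.map (Subalgebra.inclusion (fun w hw => hle w hw) : S →ₐ[R] T), hp.map _, ?_⟩
  rw [Polynomial.eval₂_map]
  exact he

lemma aux_fwd {R : Type*} [CommRing R] (I : Ideal R) (n : ℕ) (x : R)
    (hx : x ∈ idealIntegralClosure (I ^ n)) :
    IsIntegral (reesAlgebra I) (Polynomial.monomial n x : R[X]) := by
  obtain ⟨m, hm, a, ha, heq⟩ := hx
  set a' : ℕ → R := fun i => if 1 ≤ i ∧ i ≤ m then a i else 0 with ha'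
  have key : ∀ i, a' i ∈ I ^ (n * i) := by
    intro i
    simp only [ha']
    split_ifs with hi
    · rw [pow_mul]; exact ha i hi.1 hi.2
    · exact zero_mem _
  have heq' : x ^ m + ∑ i ∈ Finset.Icc 1 m, a' i * x ^ (m - i) = 0 := by
    rw [← heq]
    congr 1
    refine Finset.sum_congr rfl fun i hi => ?_
    rw [Finset.mem_Icc] at hi
    simp [ha', hi.1, hi.2]
  refine ⟨X ^ m + ∑ i ∈ Finset.Icc 1 m,
      C ⟨monomial (n * i) (a' i), by rw [reesAlgebra.monomial_mem]; exact key i⟩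
        * X ^ (m - i), ?_, ?_⟩
  · apply monic_X_pow_add
    refine lt_of_le_of_lt (degree_sum_le _ _) ?_
    rw [Finset.sup_lt_iff (by exact_mod_cast WithBot.bot_lt_coe m)]
    intro i hi
    rw [Finset.mem_Icc] at hi
    refine lt_of_le_of_lt (degree_C_mul_X_pow_le _ _) ?_
    exact_mod_cast Nat.sub_lt_of_pos_le hi.1 hi.2
  · have hcoe : ∀ (s : reesAlgebra I), algebraMap (reesAlgebra I) R[X] s = s.1 := fun s => rfl
    rw [eval₂_add, eval₂_X_pow, eval₂_finset_sum]
    simp only [eval₂_mul, eval₂_C, eval₂_X_pow, hcoe, monomial_pow, monomial_mul_monomial]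
    have : ∀ i ∈ Finset.Icc 1 m,
        (monomial (n * i + n * (m - i))) (a' i * x ^ (m - i))
          = (monomial (n * m)) (a' i * x ^ (m - i)) := by
      intro i hi
      rw [Finset.mem_Icc] at hi
      rw [← Nat.mul_add, Nat.add_sub_cancel' hi.2]
    rw [Finset.sum_congr rfl this, ← map_sum, ← map_add, heq', monomial_zero_right]

lemma aux_bwd {R : Type*} [CommRing R] (I : Ideal R) (n : ℕ) (x : R)
    (hx : IsIntegral (reesAlgebra I) (Polynomial.monomial n x : R[X])) :
    x ∈ idealIntegralClosure (I ^ n) := by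
  rcases subsingleton_or_nontrivial R with hR | hR
  · exact ⟨1, one_pos, fun _ => 0, fun i _ _ => zero_mem _, Subsingleton.elim _ _⟩
  haveI : Nontrivial (reesAlgebra I) :=
    ⟨⟨0, 1, fun h => zero_ne_one (α := R[X]) (congrArg Subtype.val h)⟩⟩
  obtain ⟨p, hp, he⟩ := hx
  set q : Polynomial (reesAlgebra I) := p * X with hq_def
  have hq : q.Monic := hp.mul monic_X
  have heq : eval₂ (algebraMap (reesAlgebra I) R[X]) (monomial n x) q = 0 := by
    rw [hq_def, eval₂_mul, he, zero_mul]
  set m : ℕ := q.natDegree with hm_def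
  have hm : 0 < m := by
    rw [hm_def, hq_def, natDegree_mul_X hp.ne_zero]; omega
  set a : ℕ → R := fun i => ((q.coeff (m - i) : reesAlgebra I) : R[X]).coeff (n * i) with ha_def
  refine ⟨m, hm, a, fun i _ _ => ?_, ?_⟩
  · rw [← pow_mul]
    exact (q.coeff (m - i)).2 (n * i)
  · -- extract coefficient n*m from heq
    have h0 : (eval₂ (algebraMap (reesAlgebra I) R[X]) (monomial n x) q).coeff (n * m) = 0 := by
      rw [heq]; simp
    rw [eval₂_eq_sum_range, finset_sum_coeff] at h0
    have hterm : ∀ k ∈ Finset.range (m + 1),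
        ((algebraMap (reesAlgebra I) R[X]) (q.coeff k) * (monomial n x) ^ k).coeff (n * m)
          = a (m - k) * x ^ k := by
      intro k hk
      rw [Finset.mem_range] at hk
      have hk' : k ≤ m := by omega
      have hnm : n * m = n * (m - k) + n * k := by
        rw [← Nat.mul_add, Nat.sub_add_cancel hk']
      rw [monomial_pow, hnm, coeff_mul_monomial]
      have : m - (m - k) = k := by omega
      rw [ha_def]
      simp only [this]
      rfl
    rw [Finset.sum_congr rfl hterm] at h0
    have hreflect : ∑ k ∈ Finset.range (m + 1), a (m - k) * x ^ k
        = ∑ k ∈ Finset.range (m + 1), a k * x ^ (m - k) := by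
      rw [← Finset.sum_range_reflect (fun k => a k * x ^ (m - k)) (m + 1)]
      refine Finset.sum_congr rfl fun k hk => ?_
      rw [Finset.mem_range] at hk
      have h1 : m + 1 - 1 - k = m - k := by omega
      have h2 : m - (m - k) = k := by omega
      rw [h1, h2]
    rw [hreflect] at h0
    have ha0 : a 0 = 1 := by
      rw [ha_def]
      simp only [Nat.sub_zero, Nat.mul_zero]
      have : q.coeff m = 1 := hq.coeff_natDegree
      rw [this, OneMemClass.coe_one, coeff_one_zero]
    rw [Finset.sum_range_succ'] at h0
    rw [← h0]
    have : ∑ i ∈ Finset.Icc 1 m, a i * x ^ (m - i)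
        = ∑ i ∈ Finset.range m, a (i + 1) * x ^ (m - (i + 1)) := by
      rw [← Finset.Ico_add_one_right_eq_Icc, Finset.sum_Ico_eq_sum_range]
      simp [Nat.add_comm]
    rw [this, ha0, Nat.sub_zero, one_mul, add_comm]

lemma aux_self {R : Type*} [CommRing R] (I : Ideal R) {g : R} (hg : g ∈ I) :
    g ∈ idealIntegralClosure I := by
  refine ⟨1, one_pos, fun _ => -g, fun i h1 h2 => ?_, by simp⟩
  have : i = 1 := le_antisymm h2 h1
  rw [this, pow_one]
  exact neg_mem hg

set_option synthInstance.maxHeartbeats 1000000 in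
set_option maxHeartbeats 2000000 in
lemma aux_half {R : Type*} [CommRing R] (I J : Ideal R)
    (hIJ : ∀ g ∈ I, g ∈ idealIntegralClosure J) (n : ℕ) :
    idealIntegralClosure (I ^ n) ⊆ idealIntegralClosure (J ^ n) := by
  intro x hx
  have h1 : IsIntegral (reesAlgebra I) (monomial n x : R[X]) := aux_fwd I n x hx
  have hsub : (reesAlgebra I : Subalgebra R R[X])
      ≤ (integralClosure (reesAlgebra J) R[X]).restrictScalars R := by
    rw [← adjoin_monomial_eq_reesAlgebra]
    apply Algebra.adjoin_le
    rintro _ ⟨g, hg, rfl⟩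
    show IsIntegral (reesAlgebra J) _
    have hg' : g ∈ idealIntegralClosure (J ^ 1) := by
      rw [pow_one]; exact hIJ g hg
    exact aux_fwd J 1 g hg'
  have h2 : IsIntegral ((integralClosure (reesAlgebra J) R[X]).restrictScalars R)
      (monomial n x : R[X]) := aux_mono hsub h1
  have h3 : IsIntegral (integralClosure (reesAlgebra J) R[X]) (monomial n x : R[X]) := h2
  exact aux_bwd J n x (isIntegral_trans _ h3)

/-- In a Noetherian ring, if two ideals have the same integral closure then so do their
`n`-th powers, for every `n ≥ 1`. -/
theorem statement10 {R : Type*} [CommRing R] [IsNoetherianRing R]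
    (I J : Ideal R) (h : idealIntegralClosure I = idealIntegralClosure J)
    (n : ℕ) (hn : 1 ≤ n) :
    idealIntegralClosure (I ^ n) = idealIntegralClosure (J ^ n) := by
  apply subset_antisymm
  · exact aux_half I J (fun g hg => h ▸ aux_self I hg) n
  · exact aux_half J I (fun g hg => h.symm ▸ aux_self J hg) n
end

section
/- Let (R, m) be a regular local ring of characteristic zero, I ⊆ R an ideal with ord(I) = d finite, and suppose the module of derivations of R separates a regular system of parameters (i.e., for each parameter tᵢ there is a derivation ∂ᵢ with ∂ᵢ(tᵢ) a unit and ∂ᵢ(tⱼ)=0 for j≠i). Then d is the minimal natural number such that the ideal generated by all values D(I), as D ranges over differential operators of order ≤ d (compositions of at most d derivations and multiplications), equals R. -/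
section Aux

variable {R : Type*} [CommRing R] [Algebra ℚ R]

lemma aux_der_pow (J : Ideal R) (D' : Derivation ℚ R R) :
    ∀ k : ℕ, ∀ x ∈ J ^ (k + 1), D' x ∈ J ^ k := by
  intro k
  induction k with
  | zero => intro x _; simp
  | succ k ih =>
    intro x hx
    rw [pow_succ] at hx
    refine Submodule.mul_induction_on hx ?_ ?_
    · intro a ha b hb
      rw [D'.leibniz, smul_eq_mul, smul_eq_mul]
      refine Ideal.add_mem _ ?_ ?_
      · exact Ideal.mul_mem_right _ _ ha
      · rw [pow_succ]
        exact mul_comm b (D' a) ▸ Ideal.mul_mem_mul (ih a ha) hb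
    · intro x y hx hy
      rw [map_add]
      exact Ideal.add_mem _ hx hy

noncomputable def auxE {n : ℕ} (t : Fin n → R) (D : Fin n → Derivation ℚ R R)
    (v : Fin n → R) (x : R) : R := ∑ i, v i * (t i * D i x)

variable {n : ℕ} {t : Fin n → R} {D : Fin n → Derivation ℚ R R} {v : Fin n → R}

lemma auxE_add (x y : R) : auxE t D v (x + y) = auxE t D v x + auxE t D v y := by
  simp [auxE, mul_add, Finset.sum_add_distrib]

lemma auxE_mul (a b : R) :
    auxE t D v (a * b) = a * auxE t D v b + b * auxE t D v a := by
  simp only [auxE, Derivation.leibniz, smul_eq_mul, Finset.mul_sum,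
    ← Finset.sum_add_distrib]
  exact Finset.sum_congr rfl fun i _ => by ring

lemma auxE_mem {m : Ideal R} (hparam : Ideal.span (Set.range t) = m) (x : R) :
    auxE t D v x ∈ m := by
  refine Ideal.sum_mem _ fun i _ => ?_
  have ht : t i ∈ m := hparam ▸ Submodule.subset_span ⟨i, rfl⟩
  exact Ideal.mul_mem_left _ _ (Ideal.mul_mem_right _ _ ht)

lemma auxE_t (hv : ∀ i, v i * D i (t i) = 1)
    (hzero : ∀ i j, j ≠ i → D i (t j) = 0) (j : Fin n) :
    auxE t D v (t j) = t j := by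
  rw [auxE, Finset.sum_eq_single j]
  · calc v j * (t j * D j (t j)) = t j * (v j * D j (t j)) := by ring
    _ = t j := by rw [hv j, mul_one]
  · intro i _ hij
    rw [hzero i j (Ne.symm hij)]
    ring
  · simp

lemma auxE_one {m : Ideal R} (hparam : Ideal.span (Set.range t) = m)
    (hv : ∀ i, v i * D i (t i) = 1)
    (hzero : ∀ i j, j ≠ i → D i (t j) = 0) :
    ∀ b ∈ m, auxE t D v b - b ∈ m ^ 2 := by
  intro b hb
  rw [← hparam] at hb
  induction hb using Submodule.span_induction with
  | mem x hx =>
      obtain ⟨j, rfl⟩ := hx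
      rw [auxE_t hv hzero, sub_self]
      exact zero_mem _
  | zero => simp [auxE]
  | add x y hx hy ihx ihy =>
      have : auxE t D v (x + y) - (x + y)
          = (auxE t D v x - x) + (auxE t D v y - y) := by
        rw [auxE_add]; ring
      rw [this]; exact add_mem ihx ihy
  | smul r x hx ih =>
      have : auxE t D v (r • x) - r • x
          = r * (auxE t D v x - x) + x * auxE t D v r := by
        rw [smul_eq_mul, auxE_mul]; ring
      rw [this]
      refine add_mem (Ideal.mul_mem_left _ _ ih) ?_
      have hx' : x ∈ m := hparam ▸ hx
      rw [pow_two]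
      exact Ideal.mul_mem_mul hx' (auxE_mem hparam r)

lemma auxE_euler {m : Ideal R} (hparam : Ideal.span (Set.range t) = m)
    (hv : ∀ i, v i * D i (t i) = 1)
    (hzero : ∀ i j, j ≠ i → D i (t j) = 0) :
    ∀ k : ℕ, ∀ x ∈ m ^ k, auxE t D v x - (k : R) * x ∈ m ^ (k + 1) := by
  intro k
  induction k with
  | zero =>
      intro x _
      simpa using auxE_mem hparam x
  | succ k ih =>
      intro x hx
      rw [pow_succ] at hx
      refine Submodule.mul_induction_on hx ?_ ?_
      · intro a ha b hb
        have key : auxE t D v (a * b) - ((k + 1 : ℕ) : R) * (a * b)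
            = a * (auxE t D v b - b) + b * (auxE t D v a - (k : R) * a) := by
          rw [auxE_mul]; push_cast; ring
        rw [key]
        refine add_mem ?_ ?_
        · have h2 : m ^ (k + 1 + 1) = m ^ k * m ^ 2 := by rw [← pow_add]
          rw [h2]
          exact Ideal.mul_mem_mul ha (auxE_one hparam hv hzero b hb)
        · rw [pow_succ]
          exact mul_comm b _ ▸ Ideal.mul_mem_mul (ih a ha) hb
      · intro x y hx hy
        have h3 : auxE t D v (x + y) - ((k + 1 : ℕ) : R) * (x + y)
            = (auxE t D v x - ((k + 1 : ℕ) : R) * x)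
              + (auxE t D v y - ((k + 1 : ℕ) : R) * y) := by
          rw [auxE_add]; ring
        rw [h3]; exact add_mem hx hy

end Aux

/-- The iterated derivation ideal `F^{≤i}(I)` (for the module of all `ℚ`-derivations):
`F^{≤0}(I) = I` and `F^{≤i+1}(I) = F^{≤i}(I) + (D x : D a derivation, x ∈ F^{≤i}(I))`. -/
def derIdeal (R : Type*) [CommRing R] [Algebra ℚ R] : ℕ → Ideal R → Ideal R
  | 0, I => I
  | (i + 1), I => derIdeal R i I ⊔
      Ideal.span {y : R | ∃ D : Derivation ℚ R R, ∃ x ∈ derIdeal R i I, y = D x}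

/-- Let `(R, m)` be a regular local ring of characteristic zero whose derivations separate a
regular system of parameters `t 1, …, t n`, and let `I` be an ideal of order `d` (finite).
Then `d` is the minimal natural number such that the iterated derivation ideal `F^{≤d}(I)`
is the unit ideal. -/
theorem statement12 {R : Type*} [CommRing R] [IsLocalRing R] [IsNoetherianRing R]
    [Algebra ℚ R] {n : ℕ} (t : Fin n → R)
    (hparam : Ideal.span (Set.range t) = IsLocalRing.maximalIdeal R)
    (D : Fin n → Derivation ℚ R R)
    (hsep : ∀ i, IsUnit (D i (t i)) ∧ ∀ j, j ≠ i → D i (t j) = 0)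
    (I : Ideal R) (d : ℕ)
    (hId : I ≤ (IsLocalRing.maximalIdeal R) ^ d)
    (hId' : ¬ I ≤ (IsLocalRing.maximalIdeal R) ^ (d + 1)) :
    derIdeal R d I = ⊤ ∧ ∀ e : ℕ, derIdeal R e I = ⊤ → d ≤ e := by
  set m := IsLocalRing.maximalIdeal R with hm
  set v : Fin n → R := fun i => (((hsep i).1.unit⁻¹ : Rˣ) : R) with hvdef
  have hv : ∀ i, v i * D i (t i) = 1 := by
    intro i
    rw [hvdef]
    rw [← (hsep i).1.unit_spec]
    exact Units.inv_mul _
  have hzero : ∀ i j, j ≠ i → D i (t j) = 0 := fun i j h => (hsep i).2 j h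
  have hder_succ : ∀ e, derIdeal R (e + 1) I = derIdeal R e I ⊔
      Ideal.span {y : R | ∃ D' : Derivation ℚ R R, ∃ x ∈ derIdeal R e I, y = D' x} :=
    fun e => rfl
  have htmem : ∀ i, t i ∈ m := fun i => hparam ▸ Submodule.subset_span ⟨i, rfl⟩
  -- upper bound: derIdeal R e I ≤ m ^ (d - e)
  have bound : ∀ e, derIdeal R e I ≤ m ^ (d - e) := by
    intro e
    induction e with
    | zero => simpa [derIdeal] using hId
    | succ e ih =>
      rw [hder_succ]
      refine sup_le (ih.trans (Ideal.pow_le_pow_right (by omega))) ?_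
      rw [Ideal.span_le]
      rintro y ⟨D', x, hx, rfl⟩
      by_cases h : d ≤ e + 1
      · simp [Nat.sub_eq_zero_of_le h]
      · have hk : d - e = (d - (e + 1)) + 1 := by omega
        exact aux_der_pow m D' _ x (by rw [← hk]; exact ih hx)
  -- key lower bound
  have key : ∀ e, e ≤ d → ¬ derIdeal R e I ≤ m ^ (d - e + 1) := by
    intro e
    induction e with
    | zero => intro _; simpa [derIdeal] using hId'
    | succ e ih =>
      intro he hle
      refine ih (by omega) ?_
      intro x hx
      have hdd : d - (e + 1) + 1 = d - e := by omega
      rw [hdd] at hle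
      have hmono : derIdeal R e I ≤ derIdeal R (e + 1) I := by
        rw [hder_succ]; exact le_sup_left
      have hxm : x ∈ m ^ (d - e) := hle (hmono hx)
      have hDx : ∀ i, D i x ∈ m ^ (d - e) := fun i =>
        hle ((hder_succ e) ▸ Ideal.mem_sup_right
          (Submodule.subset_span ⟨D i, x, hx, rfl⟩))
      have hEx : auxE t D v x ∈ m ^ (d - e + 1) := by
        refine Ideal.sum_mem _ fun i _ => ?_
        refine Ideal.mul_mem_left _ _ ?_
        rw [pow_succ]
        exact mul_comm (D i x) (t i) ▸ Ideal.mul_mem_mul (hDx i) (htmem i)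
      have heu := auxE_euler hparam hv hzero (d - e) x hxm
      have hnx : ((d - e : ℕ) : R) * x ∈ m ^ (d - e + 1) := by
        have hq : ((d - e : ℕ) : R) * x
            = auxE t D v x - (auxE t D v x - ((d - e : ℕ) : R) * x) := by ring
        rw [hq]; exact sub_mem hEx heu
      have hu : IsUnit ((d - e : ℕ) : R) := by
        have h1 : ((d - e : ℕ) : R) = algebraMap ℚ R ((d - e : ℕ) : ℚ) := by
          rw [map_natCast]
        rw [h1]
        exact (isUnit_iff_ne_zero.mpr (Nat.cast_ne_zero.mpr (by omega))).map _
      obtain ⟨u, hu⟩ := hu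
      have hx2 : x = (↑u⁻¹ : R) * (((d - e : ℕ) : R) * x) := by
        rw [← hu, ← mul_assoc, Units.inv_mul, one_mul]
      rw [hx2]
      exact Ideal.mul_mem_left _ _ hnx
  constructor
  · by_contra h
    have hle := IsLocalRing.le_maximalIdeal h
    refine key d le_rfl ?_
    simpa [Nat.sub_self] using hle
  · intro e he
    by_contra hlt
    push_neg at hlt
    have h1 : (⊤ : Ideal R) ≤ m ^ (d - e) := he ▸ bound e
    have h2 : m ^ (d - e) ≤ m := by
      calc m ^ (d - e) ≤ m ^ 1 := Ideal.pow_le_pow_right (by omega)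
      _ = m := pow_one m
    exact (IsLocalRing.maximalIdeal.isMaximal R).ne_top
      (top_le_iff.mp (h1.trans h2))
end
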